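/- If a coordinate set I is stochastically sufficient for a finite stochastic decision problem, then I is statically sufficient for the underlying static decision problem; that is, any two states that agree on I have equal full-information optimal-action sets. -/
import Mathlib


/-- Full-information optimizer: actions maximizing pointwise utility at state `s`. -/
def Opt {n : ℕ} {A : Type*} {X : Fin n → Type*}
    (U : A → (∀ i, X i) → ℝ) (s : ∀ i, X i) : Set A :=
  {a | ∀ b, U b s ≤ U a s}

/-- Conditional (unnormalized) expected utility of action `a` over the `I`-fiber of `s`. -/
noncomputable def condEU {n : ℕ} {A : Type*} {X : Fin n → Type*}
    [∀ i, Fintype (X i)] [∀ i, DecidableEq (X i)]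
    (U : A → (∀ i, X i) → ℝ) (P : (∀ i, X i) → ℝ)
    (I : Finset (Fin n)) (s : ∀ i, X i) (a : A) : ℝ :=
  ∑ t ∈ Finset.univ.filter (fun t : ∀ i, X i => ∀ i ∈ I, t i = s i), P t * U a t

/-- Conditional optimizer: actions maximizing conditional expected utility on the `I`-fiber. -/
noncomputable def OptS {n : ℕ} {A : Type*} {X : Fin n → Type*}
    [∀ i, Fintype (X i)] [∀ i, DecidableEq (X i)]
    (U : A → (∀ i, X i) → ℝ) (P : (∀ i, X i) → ℝ)
    (I : Finset (Fin n)) (s : ∀ i, X i) : Set A :=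
  {a | ∀ b, condEU U P I s b ≤ condEU U P I s a}

/-- `I` is statically sufficient: states agreeing on `I` have the same optimizer. -/
def StaticSufficient {n : ℕ} {A : Type*} {X : Fin n → Type*}
    (U : A → (∀ i, X i) → ℝ) (I : Finset (Fin n)) : Prop :=
  ∀ s t : ∀ i, X i, (∀ i ∈ I, s i = t i) → Opt U s = Opt U t

/-- `I` is stochastically sufficient: the conditional optimizer agrees with the
full-information optimizer at every state. -/
def StochSufficient {n : ℕ} {A : Type*} {X : Fin n → Type*}
    [∀ i, Fintype (X i)] [∀ i, DecidableEq (X i)]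
    (U : A → (∀ i, X i) → ℝ) (P : (∀ i, X i) → ℝ) (I : Finset (Fin n)) : Prop :=
  ∀ s : ∀ i, X i, OptS U P I s = Opt U s

/-- `I` is stochastically decisive: every positive-probability state's observed fiber
has a unique conditional optimal action. -/
def StochDecisive {n : ℕ} {A : Type*} {X : Fin n → Type*}
    [∀ i, Fintype (X i)] [∀ i, DecidableEq (X i)]
    (U : A → (∀ i, X i) → ℝ) (P : (∀ i, X i) → ℝ) (I : Finset (Fin n)) : Prop :=
  ∀ s : ∀ i, X i, 0 < P s → ∃ a : A, OptS U P I s = {a}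

theorem stochastic_sufficient_implies_static_sufficient
    {n : ℕ} {A : Type*} {X : Fin n → Type*}
    [Fintype A] [Nonempty A] [∀ i, Fintype (X i)] [∀ i, Nonempty (X i)]
    [∀ i, DecidableEq (X i)]
    (U : A → (∀ i, X i) → ℝ) (P : (∀ i, X i) → ℝ)
    (hP0 : ∀ s, 0 ≤ P s) (hP1 : ∑ s : ∀ i, X i, P s = 1)
    (I : Finset (Fin n))
    (hstoch : StochSufficient U P I) :
    StaticSufficient U I := by
  intro s t hst
  have hfib : (Finset.univ.filter (fun u : ∀ i, X i => ∀ i ∈ I, u i = s i))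
      = Finset.univ.filter (fun u : ∀ i, X i => ∀ i ∈ I, u i = t i) := by
    apply Finset.filter_congr
    intro u _
    constructor <;> intro h i hi <;> [rw [h i hi, hst i hi]; rw [h i hi, ← hst i hi]]
  have hEU : ∀ a, condEU U P I s a = condEU U P I t a := by
    intro a; unfold condEU; rw [hfib]
  have : OptS U P I s = OptS U P I t := by
    ext a; simp only [OptS, Set.mem_setOf_eq, hEU]
  rw [← hstoch s, ← hstoch t, this]
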